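/- arXiv:2107.01566 — 7 statements merged into one kernel-verified Lean document; each statement's English description precedes it below -/
import Mathlib

section
/- For a regular language L of index N, and any 1 ≤ k ≤ N, there exists a set H = {h₁, ..., h_k} of k words over Σ such that hᵢ and hⱼ are not Myhill-Nerode equivalent with respect to L for all i ≠ j, and every hᵢ has length at most k − 1. -/
/-- Myhill-Nerode equivalence of two words with respect to a language. -/
def mnEquiv {α : Type} (L : Language α) (h₁ h₂ : List α) : Prop :=
  ∀ t : List α, h₁ ++ t ∈ L ↔ h₂ ++ t ∈ L

def mnSetoid {α : Type} (L : Language α) : Setoid (List α) :=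
  ⟨mnEquiv L, ⟨fun _ _ => Iff.rfl, fun h t => (h t).symm, fun h h' t => (h t).trans (h' t)⟩⟩

/-- The Myhill-Nerode index of a language: the number of equivalence classes. -/
noncomputable def mnIndex {α : Type} (L : Language α) : ℕ := Nat.card (Quotient (mnSetoid L))

theorem stmt0 {α : Type} (L : Language α) (N : ℕ)
    (hreg : Finite (Quotient (mnSetoid L))) (hN : mnIndex L = N)
    (k : ℕ) (hk1 : 1 ≤ k) (hkN : k ≤ N) :
    ∃ H : Finset (List α), H.card = k ∧
      (∀ h ∈ H, h.length ≤ k - 1) ∧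
      (∀ h₁ ∈ H, ∀ h₂ ∈ H, h₁ ≠ h₂ → ¬ mnEquiv L h₁ h₂) := by
  classical
  set Q := Quotient (mnSetoid L) with hQ
  let S : ℕ → Set Q := fun m =>
    {q | ∃ w : List α, w.length ≤ m ∧ Quotient.mk (mnSetoid L) w = q}
  have hmono : ∀ m n, m ≤ n → S m ⊆ S n := by
    rintro m n hmn q ⟨w, hw, rfl⟩
    exact ⟨w, hw.trans hmn, rfl⟩
  have happend : ∀ (x y : List α) (a : α), mnEquiv L x y →
      mnEquiv L (x ++ [a]) (y ++ [a]) := by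
    intro x y a h t
    simpa [List.append_assoc] using h ([a] ++ t)
  have hstab : ∀ m, S m = S (m + 1) → ∀ w : List α,
      Quotient.mk (mnSetoid L) w ∈ S m := by
    intro m heq w
    induction w using List.reverseRecOn with
    | nil => exact ⟨[], by simp, rfl⟩
    | append_singleton u a ih =>
      obtain ⟨v, hv, hquv⟩ := ih
      have hequiv : mnEquiv L v u := Quotient.exact hquv
      have h2 : Quotient.mk (mnSetoid L) (u ++ [a]) ∈ S (m + 1) := by
        refine ⟨v ++ [a], by simp [Nat.succ_le_succ hv], ?_⟩
        exact Quotient.sound (happend _ _ _ hequiv)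
      rwa [← heq] at h2
  have hN1 : 1 ≤ N := hk1.trans hkN
  have hfin : ∀ m, (S m).Finite := fun m => Set.toFinite _
  have hcardQ : Nat.card Q = N := hN
  have hcard : ∀ m, min (m + 1) N ≤ (S m).ncard := by
    intro m
    induction m with
    | zero =>
      have hne : (S 0).Nonempty := ⟨Quotient.mk (mnSetoid L) [], ⟨[], by simp, rfl⟩⟩
      have := (Set.ncard_pos (hfin 0)).mpr hne
      omega
    | succ m ih =>
      by_cases h : S m = Set.univ
      · have huniv : S (m + 1) = Set.univ :=
          Set.eq_univ_of_univ_subset (h ▸ hmono m (m + 1) (Nat.le_succ m))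
        rw [huniv, Set.ncard_univ, hcardQ]
        omega
      · have hne : S m ≠ S (m + 1) := by
          intro heq
          apply h
          ext q
          simp only [Set.mem_univ, iff_true]
          obtain ⟨w, rfl⟩ := Quotient.exists_rep q
          exact hstab m heq w
        have hss : S m ⊂ S (m + 1) :=
          (hmono m (m + 1) (Nat.le_succ m)).ssubset_of_ne hne
        have := Set.ncard_lt_ncard hss (hfin (m + 1))
        omega
  have hk' : k ≤ (S (k - 1)).ncard := by
    have := hcard (k - 1)
    have h1 : k - 1 + 1 = k := Nat.sub_add_cancel hk1
    rw [h1] at this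
    omega
  -- extract a finset of k classes
  let F : Finset Q := (hfin (k - 1)).toFinset
  have hFcard : k ≤ F.card := by
    rwa [Set.ncard_eq_toFinset_card _ (hfin (k-1))] at hk'
  obtain ⟨T, hTsub, hTcard⟩ := Finset.exists_subset_card_eq hFcard
  have hTS : ∀ q ∈ T, q ∈ S (k - 1) := by
    intro q hq
    have := hTsub hq
    simpa [F, Set.Finite.mem_toFinset] using this
  let g : Q → List α := fun q =>
    if h : q ∈ S (k - 1) then h.choose else []
  have hg : ∀ q ∈ T, (g q).length ≤ k - 1 ∧ Quotient.mk (mnSetoid L) (g q) = q := by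
    intro q hq
    have hqS := hTS q hq
    simp only [g, dif_pos hqS]
    exact hqS.choose_spec
  refine ⟨T.image g, ?_, ?_, ?_⟩
  · rw [Finset.card_image_of_injOn, hTcard]
    intro q₁ h₁ q₂ h₂ hgq
    rw [← (hg q₁ h₁).2, ← (hg q₂ h₂).2, hgq]
  · intro h hh
    obtain ⟨q, hq, rfl⟩ := Finset.mem_image.mp hh
    exact (hg q hq).1
  · intro h₁ hh₁ h₂ hh₂ hne heqv
    obtain ⟨q₁, hq₁, rfl⟩ := Finset.mem_image.mp hh₁
    obtain ⟨q₂, hq₂, rfl⟩ := Finset.mem_image.mp hh₂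
    have : q₁ = q₂ := by
      rw [← (hg q₁ hq₁).2, ← (hg q₂ hq₂).2]
      exact Quotient.sound heqv
    exact hne (by rw [this])
end

section
/- Let 𝒜₁, 𝒜₂ be DFAs over Σ, and let 𝒜 = ⟨Σ, Q, q₀, δ, ∅⟩ be a DFA structure with empty acceptance set. Then F_{𝒜,𝒜₁} ∩ F_{𝒜,𝒜₂} = ∅ if and only if there exists a set F ⊆ Q such that the DFA 𝒜_F = ⟨Σ, Q, q₀, δ, F⟩ separates ⟨𝒜₁, 𝒜₂⟩, i.e., L(𝒜₁) ⊆ L(𝒜_F) and L(𝒜_F) ∩ L(𝒜₂) = ∅. -/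
/-- `reachSet A A'` is the set of states of `A` reachable from the initial state of `A`
by reading some word accepted by `A'`. -/
def reachSet {α Q Q' : Type} (A : DFA α Q) (A' : DFA α Q') : Set Q :=
  {q | ∃ w ∈ A'.accepts, A.eval w = q}

theorem stmt3 {α Q Q₁ Q₂ : Type} (A₁ : DFA α Q₁) (A₂ : DFA α Q₂)
    (A : DFA α Q) (hA : A.accept = ∅) :
    reachSet A A₁ ∩ reachSet A A₂ = ∅ ↔
      ∃ F : Set Q,
        (∀ w ∈ A₁.accepts, w ∈ (DFA.mk A.step A.start F).accepts) ∧
        (∀ w, ¬ (w ∈ (DFA.mk A.step A.start F).accepts ∧ w ∈ A₂.accepts)) := by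
  have heval : ∀ (F : Set Q) (w : List α),
      (DFA.mk A.step A.start F).eval w = A.eval w := fun _ _ => rfl
  constructor
  · intro h
    refine ⟨reachSet A A₁, ?_, ?_⟩
    · intro w hw
      show (DFA.mk A.step A.start _).eval w ∈ reachSet A A₁
      rw [heval]
      exact ⟨w, hw, rfl⟩
    · rintro w ⟨h1, h2⟩
      have hq : A.eval w ∈ reachSet A A₁ := h1
      have hq2 : A.eval w ∈ reachSet A A₂ := ⟨w, h2, rfl⟩
      exact Set.eq_empty_iff_forall_notMem.mp h _ ⟨hq, hq2⟩
  · rintro ⟨F, h1, h2⟩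
    ext q
    simp only [Set.mem_inter_iff, Set.mem_empty_iff_false, iff_false]
    rintro ⟨⟨w1, hw1, he1⟩, ⟨w2, hw2, he2⟩⟩
    have hF1 : A.eval w1 ∈ F := h1 w1 hw1
    have : A.eval w2 ∈ F := by rw [he2, ← he1]; exact hF1
    exact h2 w2 ⟨this, hw2⟩
end

section
/- If two words h₁, h₂ over Σ are not Myhill-Nerode equivalent with respect to a regular language L of index N, then there exists a distinguishing tail t with |t| ≤ N − 1, i.e., exactly one of h₁·t, h₂·t is in L. -/
/-- Indistinguishability by tails of length at most `k`. -/
def Ek {α : Type} (L : Language α) (k : ℕ) (x y : List α) : Prop :=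
  ∀ t : List α, t.length ≤ k → (x ++ t ∈ L ↔ y ++ t ∈ L)

lemma Ek_mono {α : Type} (L : Language α) {j k : ℕ} (hjk : j ≤ k) {x y : List α}
    (h : Ek L k x y) : Ek L j x y := fun t ht => h t (ht.trans hjk)

lemma Ek_step {α : Type} (L : Language α) (k : ℕ) (x y : List α) :
    Ek L (k + 1) x y ↔ (x ∈ L ↔ y ∈ L) ∧ ∀ a, Ek L k (x ++ [a]) (y ++ [a]) := by
  constructor
  · intro h
    refine ⟨by simpa using h [] (by simp), fun a t ht => ?_⟩
    rw [← List.append_cons x a t, ← List.append_cons y a t]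
    exact h (a :: t) (by simp; omega)
  · rintro ⟨h0, hs⟩ t ht
    cases t with
    | nil => simpa using h0
    | cons a t =>
      rw [List.append_cons x a t, List.append_cons y a t]
      exact hs a t (by simp at ht; omega)

/-- `Ek` as a setoid on words. -/
def EkSetoid {α : Type} (L : Language α) (k : ℕ) : Setoid (List α) :=
  ⟨Ek L k, ⟨fun _ _ _ => Iff.rfl, fun h t ht => (h t ht).symm,
    fun h h' t ht => (h t ht).trans (h' t ht)⟩⟩

lemma mnEquiv_le_Ek {α : Type} (L : Language α) (k : ℕ) {x y : List α}
    (h : mnEquiv L x y) : Ek L k x y := fun t _ => h t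

/-- If `Ek` is stable at level `k`, then `Ek k` implies full Myhill–Nerode equivalence. -/
lemma stable_mnEquiv {α : Type} (L : Language α) (k : ℕ)
    (hst : ∀ x y, Ek L k x y → Ek L (k + 1) x y) :
    ∀ x y, Ek L k x y → mnEquiv L x y := by
  have key : ∀ n, ∀ x y, Ek L k x y → Ek L (k + n) x y := by
    intro n
    induction n with
    | zero => exact fun x y h => h
    | succ n ih =>
      intro x y h
      have h1 := (Ek_step L k x y).mp (hst x y h)
      rw [show k + (n + 1) = (k + n) + 1 by omega, Ek_step]
      exact ⟨h1.1, fun a => ih _ _ (h1.2 a)⟩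
  intro x y h t
  exact key t.length x y h t (by omega)

noncomputable def ekCard {α : Type} (L : Language α) (k : ℕ) : ℕ :=
  Nat.card (Quotient (EkSetoid L k))

theorem stmt8 {α : Type} (L : Language α) (N : ℕ)
    (hreg : Finite (Quotient (mnSetoid L))) (hN : mnIndex L = N)
    (h₁ h₂ : List α) (h : ¬ mnEquiv L h₁ h₂) :
    ∃ t : List α, t.length ≤ N - 1 ∧ Xor' (h₁ ++ t ∈ L) (h₂ ++ t ∈ L) := by
  -- the natural surjection from the Myhill–Nerode quotient onto the level-k quotient
  have proj : ∀ k : ℕ, ∃ f : Quotient (mnSetoid L) → Quotient (EkSetoid L k),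
      Function.Surjective f ∧ ∀ x : List α, f (Quotient.mk _ x) = Quotient.mk _ x := by
    intro k
    refine ⟨Quotient.map id (fun x y hxy => mnEquiv_le_Ek L k hxy), ?_, fun x => rfl⟩
    intro q
    obtain ⟨x, rfl⟩ := Quotient.exists_rep q
    exact ⟨Quotient.mk _ x, rfl⟩
  have fin : ∀ k, Finite (Quotient (EkSetoid L k)) := by
    intro k
    obtain ⟨f, hf, -⟩ := proj k
    exact Finite.of_surjective f hf
  have cardle : ∀ k, ekCard L k ≤ N := by
    intro k
    obtain ⟨f, hf, -⟩ := proj k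
    have := Nat.card_le_card_of_surjective f hf
    simpa [ekCard, ← hN, mnIndex] using this
  -- the projection from level k+1 to level k
  have step_proj : ∀ k : ℕ, ∃ f : Quotient (EkSetoid L (k + 1)) → Quotient (EkSetoid L k),
      Function.Surjective f ∧ ∀ x : List α, f (Quotient.mk _ x) = Quotient.mk _ x := by
    intro k
    refine ⟨Quotient.map id (fun x y hxy => Ek_mono L (Nat.le_succ k) hxy), ?_, fun x => rfl⟩
    intro q
    obtain ⟨x, rfl⟩ := Quotient.exists_rep q
    exact ⟨Quotient.mk _ x, rfl⟩
  -- if level k is not stable, the cardinality strictly increases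
  have card_incr : ∀ k, (∃ x y, Ek L k x y ∧ ¬ Ek L (k + 1) x y) →
      ekCard L k < ekCard L (k + 1) := by
    intro k hk
    obtain ⟨x, y, hxy, hnxy⟩ := hk
    obtain ⟨f, hf, hcomm⟩ := step_proj k
    have := fin (k + 1)
    have hle : ekCard L k ≤ ekCard L (k + 1) := Nat.card_le_card_of_surjective f hf
    rcases lt_or_eq_of_le hle with h' | h'
    · exact h'
    · exfalso
      have hbij : Function.Bijective f :=
        (Nat.bijective_iff_surjective_and_card f).mpr ⟨hf, h'.symm⟩
      have heq : (Quotient.mk (EkSetoid L (k+1)) x) = Quotient.mk _ y := by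
        apply hbij.injective
        rw [hcomm, hcomm]
        exact Quotient.sound hxy
      exact hnxy (Quotient.exact heq)
  -- N ≥ 1
  have hNpos : 1 ≤ N := by
    rw [← hN, mnIndex]
    have : Nonempty (Quotient (mnSetoid L)) := ⟨Quotient.mk _ []⟩
    exact Nat.one_le_iff_ne_zero.mpr (Nat.card_ne_zero.mpr ⟨this, hreg⟩)
  -- there exists a stable level k < N
  have exstable : ∃ k < N, ∀ x y, Ek L k x y → Ek L (k + 1) x y := by
    by_contra hcon
    push_neg at hcon
    have grow : ∀ k ≤ N, k + 1 ≤ ekCard L k := by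
      intro k hk
      induction k with
      | zero =>
        have : Nonempty (Quotient (EkSetoid L 0)) := ⟨Quotient.mk _ []⟩
        exact Nat.one_le_iff_ne_zero.mpr (Nat.card_ne_zero.mpr ⟨this, fin 0⟩)
      | succ k ih =>
        have h1 := ih (by omega)
        have h2 := card_incr k (hcon k (by omega))
        omega
    have := grow N le_rfl
    have := cardle N
    omega
  obtain ⟨k, hkN, hst⟩ := exstable
  -- Ek (N-1) implies mnEquiv
  have main : ¬ Ek L (N - 1) h₁ h₂ := by
    intro hE
    exact h (stable_mnEquiv L k hst h₁ h₂ (Ek_mono L (by omega) hE))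
  rw [Ek] at main
  push_neg at main
  obtain ⟨t, ht, hx⟩ := main
  refine ⟨t, ht, ?_⟩
  unfold Xor'
  tauto
end

section
/- For every n ≥ 1, the language L_n = { aⁿ bᵢ bᵢ : 1 ≤ i ≤ n } over the alphabet Σ_n = {a, b₁, ..., b_n} has Myhill-Nerode index exactly 2n + 3. -/
/-- The alphabet `Σ_n = {a, b₁, …, b_n}`: `none` is the letter `a`,
`some i` is the letter `b_{i+1}`. -/
abbrev Sig (n : ℕ) := Option (Fin n)

/-- `L_n = { aⁿ bᵢ bᵢ : 1 ≤ i ≤ n }`. -/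
def Ln (n : ℕ) : Language (Sig n) :=
  { w | ∃ i : Fin n, w = List.replicate n none ++ [some i, some i] }

/-- State space of the minimal DFA: `inl (inl k)` = read `a^k`,
`inl (inr i)` = read `a^n b_i`, `inr 0` = accepting, `inr 1` = dead. -/
abbrev MNSt (n : ℕ) := (Fin (n+1) ⊕ Fin n) ⊕ Fin 2

def mnStep (n : ℕ) : MNSt n → Sig n → MNSt n
  | Sum.inl (Sum.inl k), none =>
      if h : (k : ℕ) < n then Sum.inl (Sum.inl ⟨k + 1, by omega⟩) else Sum.inr 1
  | Sum.inl (Sum.inl k), some i =>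
      if (k : ℕ) = n then Sum.inl (Sum.inr i) else Sum.inr 1
  | Sum.inl (Sum.inr i), some j => if i = j then Sum.inr 0 else Sum.inr 1
  | Sum.inl (Sum.inr _), none => Sum.inr 1
  | Sum.inr _, _ => Sum.inr 1

def mnDelta (n : ℕ) (w : List (Sig n)) : MNSt n :=
  w.foldl (mnStep n) (Sum.inl (Sum.inl 0))

/-- Future language of each state. -/
def mnP (n : ℕ) : MNSt n → List (Sig n) → Prop
  | Sum.inl (Sum.inl k), t => ∃ i : Fin n, t = List.replicate (n - k) none ++ [some i, some i]
  | Sum.inl (Sum.inr i), t => t = [some i]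
  | Sum.inr r, t => r = 0 ∧ t = []

lemma mnP_nil {n : ℕ} (s : MNSt n) : mnP n s [] ↔ s = Sum.inr 0 := by
  rcases s with (k | i) | r
  · simp [mnP]
  · simp [mnP]
  · constructor
    · rintro ⟨h, -⟩; rw [h]
    · rintro h; cases h; exact ⟨rfl, rfl⟩

lemma mnP_cons {n : ℕ} (s : MNSt n) (x : Sig n) (t : List (Sig n)) :
    mnP n s (x :: t) ↔ mnP n (mnStep n s x) t := by
  rcases s with (k | i) | r
  · rcases x with _ | i
    · -- letter a from state a^k
      by_cases h : (k : ℕ) < n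
      · have : n - (k : ℕ) = (n - ((k : ℕ) + 1)) + 1 := by omega
        simp [mnP, mnStep, h, this, List.replicate_succ]
      · have hk : (k : ℕ) = n := by omega
        have : n - (k : ℕ) = 0 := by omega
        simp [mnP, mnStep, h, this]
    · -- letter b_i from state a^k
      by_cases h : (k : ℕ) = n
      · have : n - (k : ℕ) = 0 := by omega
        simp [mnP, mnStep, h, this]
      · have hk : (k : ℕ) < n := by omega
        have : n - (k : ℕ) = (n - ((k : ℕ) + 1)) + 1 := by omega
        simp [mnP, mnStep, h, this, List.replicate_succ]
  · rcases x with _ | j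
    · simp [mnP, mnStep]
    · by_cases h : i = j
      · subst h; simp [mnP, mnStep]
      · simp [mnP, mnStep, h, Ne.symm h]
  · simp [mnP, mnStep]

lemma mnRun {n : ℕ} (t : List (Sig n)) (s : MNSt n) :
    t.foldl (mnStep n) s = Sum.inr 0 ↔ mnP n s t := by
  induction t generalizing s with
  | nil => simpa using (mnP_nil s).symm
  | cons x t ih => rw [List.foldl_cons, ih, mnP_cons]

lemma mem_Ln_iff {n : ℕ} (w : List (Sig n)) : w ∈ Ln n ↔ mnDelta n w = Sum.inr 0 := by
  rw [mnDelta, mnRun]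
  simp only [mnP, Nat.sub_zero, Fin.val_zero]
  exact Iff.rfl

lemma mnDelta_append {n : ℕ} (w t : List (Sig n)) :
    mnDelta n (w ++ t) = t.foldl (mnStep n) (mnDelta n w) := List.foldl_append ..

lemma mnDelta_replicate {n : ℕ} (k : ℕ) (hk : k ≤ n) :
    mnDelta n (List.replicate k (none : Sig n)) = Sum.inl (Sum.inl ⟨k, by omega⟩) := by
  induction k with
  | zero => rfl
  | succ m ih =>
      have hm : m ≤ n := by omega
      rw [List.replicate_succ' , mnDelta_append, ih hm]
      simp [mnStep, Nat.lt_of_succ_le hk]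

lemma mnP_inj {n : ℕ} (hn : 1 ≤ n) {s s' : MNSt n}
    (h : ∀ t, mnP n s t ↔ mnP n s' t) : s = s' := by
  set i0 : Fin n := ⟨0, hn⟩ with hi0
  rcases s with (k | i) | r <;> rcases s' with (k' | i') | r'
  · -- a^k vs a^k'
    have h1 := (h (List.replicate (n - k) none ++ [some i0, some i0])).mp ⟨i0, rfl⟩
    obtain ⟨j, hj⟩ := h1
    have hl := congrArg List.length hj
    simp at hl
    have hk : (k : ℕ) ≤ n := by omega
    have hk' : (k' : ℕ) ≤ n := by omega
    have : (k : ℕ) = k' := by omega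
    exact congrArg _ (congrArg _ (Fin.ext this))
  · have h1 := (h (List.replicate (n - k) none ++ [some i0, some i0])).mp ⟨i0, rfl⟩
    have hl := congrArg List.length h1
    simp [mnP] at hl
  · have h1 := (h (List.replicate (n - k) none ++ [some i0, some i0])).mp ⟨i0, rfl⟩
    obtain ⟨-, h2⟩ := h1
    simp at h2
  · have h1 := (h [some i]).mp rfl
    obtain ⟨j, hj⟩ := h1
    have hl := congrArg List.length hj
    simp at hl
  · have h1 := (h [some i]).mp rfl
    simp [mnP] at h1
    exact congrArg _ (congrArg _ h1)
  · have h1 := (h [some i]).mp rfl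
    obtain ⟨-, h2⟩ := h1
    simp at h2
  · have h1 := (h (List.replicate (n - k') none ++ [some i0, some i0])).mpr ⟨i0, rfl⟩
    obtain ⟨-, h2⟩ := h1
    simp at h2
  · have h1 := (h [some i']).mpr rfl
    obtain ⟨-, h2⟩ := h1
    simp at h2
  · have h0 := h []
    simp [mnP] at h0
    fin_cases r <;> fin_cases r' <;> simp_all

lemma mnDelta_surj {n : ℕ} (hn : 1 ≤ n) : Function.Surjective (mnDelta n) := by
  rintro ((k | i) | r)
  · refine ⟨List.replicate (k : ℕ) none, ?_⟩
    rw [mnDelta_replicate (k : ℕ) (by omega)]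
  · refine ⟨List.replicate n none ++ [some i], ?_⟩
    rw [mnDelta_append, mnDelta_replicate n le_rfl]
    simp [mnStep]
  · fin_cases r
    · exact ⟨List.replicate n none ++ [some ⟨0, hn⟩, some ⟨0, hn⟩],
        (mem_Ln_iff _).mp ⟨⟨0, hn⟩, rfl⟩⟩
    · refine ⟨[some ⟨0, hn⟩], ?_⟩
      have : (((0 : Fin (n+1)) : ℕ) = n) = False := by simp; omega
      simp [mnDelta, mnStep, this]
      exact if_neg (show ¬ (0 : ℕ) = n by omega)

lemma mnEquiv_iff_delta {n : ℕ} (hn : 1 ≤ n) (w₁ w₂ : List (Sig n)) :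
    mnEquiv (Ln n) w₁ w₂ ↔ mnDelta n w₁ = mnDelta n w₂ := by
  constructor
  · intro h
    apply mnP_inj hn
    intro t
    have ht := h t
    rw [mem_Ln_iff, mem_Ln_iff, mnDelta_append, mnDelta_append, mnRun, mnRun] at ht
    exact ht
  · intro h t
    rw [mem_Ln_iff, mem_Ln_iff, mnDelta_append, mnDelta_append, h]

theorem stmt9 (n : ℕ) (hn : 1 ≤ n) : mnIndex (Ln n) = 2 * n + 3 := by
  have hbij : Function.Bijective
      (Quotient.lift (mnDelta n) (fun a b h => (mnEquiv_iff_delta hn a b).mp h) :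
        Quotient (mnSetoid (Ln n)) → MNSt n) := by
    constructor
    · intro x y
      induction x using Quotient.ind
      induction y using Quotient.ind
      intro h
      exact Quotient.sound ((mnEquiv_iff_delta hn _ _).mpr h)
    · intro s
      obtain ⟨w, hw⟩ := mnDelta_surj hn s
      exact ⟨⟦w⟧, hw⟩
  rw [mnIndex, Nat.card_eq_of_bijective _ hbij]
  simp [Nat.card_sum, Nat.card_eq_fintype_card]
  omega
end

section
/- Let 𝒜₁, 𝒜₂ be DFAs over Σ with finite nonempty languages and 0 ∉ Σ, and let 𝒜₁′, 𝒜₂′ be their extensions over Σ ∪ {0} obtained by sending every state to a rejecting sink on letter 0. Then for every k ≥ 1, ⟨𝒜₁, 𝒜₂⟩ is separable by a DFA with at most k states iff ⟨𝒜₁′, 𝒜₂′⟩ is strictly separable by a DFA with at most k states. -/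
/-- The DFA over `Σ ∪ {0}` (modeled by `Option α`, `none` is the letter `0`) obtained
from `A` by adding a rejecting sink (the state `none`) and sending every state to the
rejecting sink on the letter `0`. -/
def extDFA {α Q : Type} (A : DFA α Q) : DFA (Option α) (Option Q) where
  step q o :=
    match q, o with
    | some q, some σ => some (A.step q σ)
    | _, _ => none
  start := some A.start
  accept := { q | ∃ p ∈ A.accept, q = some p }

/-- `L` strictly separates `⟨L₁, L₂⟩`: `L₁ ⊊ L ⊊ comp(L₂)`. -/
def StrictSep {β : Type} (L₁ L L₂ : Language β) : Prop :=
  (∀ w ∈ L₁, w ∈ L) ∧ (∃ w ∈ L, w ∉ L₁) ∧ (∀ w ∈ L, w ∉ L₂) ∧ (∃ w, w ∉ L ∧ w ∉ L₂)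

def fwdDFA {α Q : Type} (A : DFA α Q) : DFA (Option α) Q where
  step q o := match o with | some σ => A.step q σ | none => q
  start := A.start
  accept := A.accept

def restDFA {α Q : Type} (B : DFA (Option α) Q) : DFA α Q where
  step q σ := B.step q (some σ)
  start := B.start
  accept := B.accept

lemma fwd_evalFrom {α Q : Type} (A : DFA α Q) (q : Q) (w : List (Option α)) :
    (fwdDFA A).evalFrom q w = A.evalFrom q (w.filterMap id) := by
  induction w generalizing q with
  | nil => rfl
  | cons a w ih =>
    cases a with
    | none => simpa [DFA.evalFrom, fwdDFA] using ih q
    | some σ => simpa [DFA.evalFrom, fwdDFA] using ih (A.step q σ)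

lemma fwd_accepts {α Q : Type} (A : DFA α Q) (w : List (Option α)) :
    w ∈ (fwdDFA A).accepts ↔ (w.filterMap id) ∈ A.accepts := by
  rw [DFA.mem_accepts, DFA.mem_accepts, DFA.eval, DFA.eval,
    show (fwdDFA A).start = A.start from rfl, fwd_evalFrom]
  rfl

lemma rest_evalFrom {α Q : Type} (B : DFA (Option α) Q) (q : Q) (w : List α) :
    (restDFA B).evalFrom q w = B.evalFrom q (w.map some) := by
  induction w generalizing q with
  | nil => rfl
  | cons a w ih => simpa [DFA.evalFrom, restDFA] using ih (B.step q (some a))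

lemma rest_accepts {α Q : Type} (B : DFA (Option α) Q) (w : List α) :
    w ∈ (restDFA B).accepts ↔ (w.map some) ∈ B.accepts := by
  rw [DFA.mem_accepts, DFA.mem_accepts, DFA.eval, DFA.eval,
    show (restDFA B).start = B.start from rfl, rest_evalFrom]
  rfl

lemma ext_sink {α Q : Type} (A : DFA α Q) (w : List (Option α)) :
    (extDFA A).evalFrom none w = none := by
  induction w with
  | nil => rfl
  | cons a w ih => simpa [DFA.evalFrom, extDFA] using ih

lemma ext_map {α Q : Type} (A : DFA α Q) (q : Q) (w : List α) :
    (extDFA A).evalFrom (some q) (w.map some) = some (A.evalFrom q w) := by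
  induction w generalizing q with
  | nil => rfl
  | cons a w ih => simpa [DFA.evalFrom, extDFA] using ih (A.step q a)

lemma ext_some {α Q : Type} (A : DFA α Q) (q : Q) (w : List (Option α)) (p : Q)
    (h : (extDFA A).evalFrom (some q) w = some p) :
    ∃ v : List α, w = v.map some ∧ A.evalFrom q v = p := by
  induction w generalizing q with
  | nil =>
    exact ⟨[], rfl, by simpa [DFA.evalFrom] using h⟩
  | cons a w ih =>
    cases a with
    | none =>
      rw [show (extDFA A).evalFrom (some q) (none :: w)
            = (extDFA A).evalFrom none w from rfl, ext_sink] at h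
      exact absurd h (by simp)
    | some σ =>
      obtain ⟨v, hv, hev⟩ := ih (A.step q σ) h
      exact ⟨σ :: v, by simp [hv], hev⟩

lemma ext_accepts {α Q : Type} (A : DFA α Q) (w : List (Option α)) :
    w ∈ (extDFA A).accepts ↔ ∃ v ∈ A.accepts, w = v.map some := by
  constructor
  · intro hw
    obtain ⟨p, hp, hev⟩ := hw
    obtain ⟨v, hv, hev'⟩ := ext_some A A.start w p hev
    exact ⟨v, by simpa [DFA.mem_accepts, DFA.eval, hev'] using hp, hv⟩
  · rintro ⟨v, hv, rfl⟩
    exact ⟨A.eval v, hv, by exact ext_map A A.start v⟩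

theorem stmt14 {α : Type} {Q₁ Q₂ : Type} [Fintype Q₁] [Fintype Q₂]
    (A₁ : DFA α Q₁) (A₂ : DFA α Q₂)
    (hfin₁ : { w | w ∈ A₁.accepts }.Finite) (hne₁ : ∃ w, w ∈ A₁.accepts)
    (hfin₂ : { w | w ∈ A₂.accepts }.Finite) (hne₂ : ∃ w, w ∈ A₂.accepts)
    (k : ℕ) (hk : 1 ≤ k) :
    (∃ (Q : Type) (_ : Fintype Q) (A : DFA α Q), Fintype.card Q ≤ k ∧
        (∀ w ∈ A₁.accepts, w ∈ A.accepts) ∧ (∀ w ∈ A.accepts, w ∉ A₂.accepts)) ↔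
    (∃ (Q : Type) (_ : Fintype Q) (B : DFA (Option α) Q), Fintype.card Q ≤ k ∧
        StrictSep (extDFA A₁).accepts B.accepts (extDFA A₂).accepts) := by
  obtain ⟨u₁, hu₁⟩ := hne₁
  obtain ⟨u₂, hu₂⟩ := hne₂
  constructor
  · rintro ⟨Q, fQ, A, hcard, hsub, hsep⟩
    refine ⟨Q, fQ, fwdDFA A, hcard, ?_, ?_, ?_, ?_⟩
    · intro w hw
      rw [ext_accepts] at hw
      obtain ⟨v, hv, rfl⟩ := hw
      rw [fwd_accepts]
      simpa using hsub v hv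
    · refine ⟨(u₁.map some) ++ [none], ?_, ?_⟩
      · rw [fwd_accepts]; simpa using hsub u₁ hu₁
      · rw [ext_accepts]
        rintro ⟨v, hv, hveq⟩
        have : (none : Option α) ∈ v.map some := by rw [← hveq]; simp
        simp at this
    · intro w hw hw2
      rw [ext_accepts] at hw2
      obtain ⟨v, hv, rfl⟩ := hw2
      rw [fwd_accepts] at hw
      simp at hw
      exact hsep v hw hv
    · refine ⟨(u₂.map some) ++ [none], ?_, ?_⟩
      · rw [fwd_accepts]
        simpa using fun h => hsep u₂ h hu₂
      · rw [ext_accepts]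
        rintro ⟨v, hv, hveq⟩
        have : (none : Option α) ∈ v.map some := by rw [← hveq]; simp
        simp at this
  · rintro ⟨Q, fQ, B, hcard, hsub, _, hsep, _⟩
    refine ⟨Q, fQ, restDFA B, hcard, ?_, ?_⟩
    · intro w hw
      rw [rest_accepts]
      exact hsub _ ((ext_accepts A₁ _).2 ⟨w, hw, rfl⟩)
    · intro w hw hw2
      rw [rest_accepts] at hw
      exact hsep _ hw ((ext_accepts A₂ _).2 ⟨w, hw2, rfl⟩)
end

section
/- If ⟨𝒜₁, 𝒜₂⟩ is strictly separable by some DFA, then there exists a strict separator DFA whose number of states is at most polynomial in |𝒜₁| and |𝒜₂|; specifically, one can take a DFA recognizing L(𝒜₁) ∪ {w} where w is a word in comp(L(𝒜₁) ∪ L(𝒜₂)) accepted along a simple path of the product automaton, so |w| ≤ |𝒜₁|·|𝒜₂|. -/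
open Classical in
/-- DFA on `Option (Fin (w.length+1))` recognizing `{w}`. -/
noncomputable def prefDFA {α : Type} (w : List α) : DFA α (Option (Fin (w.length + 1))) where
  step s a :=
    match s with
    | none => none
    | some i =>
      if h : ∃ hl : (i : ℕ) < w.length, w.get ⟨i, hl⟩ = a then
        some ⟨(i : ℕ) + 1, by obtain ⟨hl, _⟩ := h; omega⟩
      else none
  start := some ⟨0, by omega⟩
  accept := {s | s = some ⟨w.length, by omega⟩}

open Classical in
theorem prefDFA_eval {α : Type} (w v : List α) :
    (prefDFA w).eval v =
      if h : v <+: w then some ⟨v.length, by have := h.length_le; omega⟩ else none := by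
  induction v using List.reverseRecOn with
  | nil =>
    simp [prefDFA, DFA.eval_nil]
  | append_singleton v a ih =>
    rw [DFA.eval_append_singleton, ih]
    by_cases hv : v <+: w
    · rw [dif_pos hv]
      by_cases hva : v ++ [a] <+: w
      · have hlt : v.length < w.length := by
          have := hva.length_le; simp at this; omega
        have hget : w.get ⟨v.length, hlt⟩ = a := by
          obtain ⟨t, ht⟩ := hva
          subst ht
          rw [List.get_eq_getElem]
          simp only [List.append_assoc, List.singleton_append]
          rw [List.getElem_append_right (Nat.le_refl _)]
          simp
        rw [dif_pos hva]
        simp only [prefDFA]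
        rw [dif_pos ⟨hlt, hget⟩]
        simp
      · rw [dif_neg hva]
        simp only [prefDFA]
        rw [dif_neg]
        rintro ⟨hl, hg⟩
        apply hva
        have htake : w.take v.length = v := (List.prefix_iff_eq_take.mp hv).symm
        have : w.take (v.length + 1) = v ++ [a] := by
          rw [List.take_succ, htake]
          rw [List.getElem?_eq_getElem hl]
          rw [List.get_eq_getElem] at hg
          simp [hg]
        rw [← this]
        exact List.take_prefix _ _
    · rw [dif_neg hv, dif_neg (fun hva => hv ((List.prefix_append v [a]).trans hva))]
      simp [prefDFA]

/-- Product DFA with a custom accept set. -/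
def prodDFA {α σ₁ σ₂ : Type} (M₁ : DFA α σ₁) (M₂ : DFA α σ₂) (acc : Set (σ₁ × σ₂)) :
    DFA α (σ₁ × σ₂) where
  step s a := (M₁.step s.1 a, M₂.step s.2 a)
  start := (M₁.start, M₂.start)
  accept := acc

theorem prodDFA_evalFrom {α σ₁ σ₂ : Type} (M₁ : DFA α σ₁) (M₂ : DFA α σ₂)
    (acc : Set (σ₁ × σ₂)) (s : σ₁ × σ₂) (v : List α) :
    (prodDFA M₁ M₂ acc).evalFrom s v = (M₁.evalFrom s.1 v, M₂.evalFrom s.2 v) := by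
  induction v generalizing s with
  | nil => rfl
  | cons a v ih =>
    simp only [DFA.evalFrom, List.foldl_cons] at *
    rw [ih]
    rfl

theorem prodDFA_eval {α σ₁ σ₂ : Type} (M₁ : DFA α σ₁) (M₂ : DFA α σ₂)
    (acc : Set (σ₁ × σ₂)) (v : List α) :
    (prodDFA M₁ M₂ acc).eval v = (M₁.eval v, M₂.eval v) :=
  prodDFA_evalFrom M₁ M₂ acc _ v

/-- Any accepted word can be shrunk to length ≤ card σ. -/
theorem shrink {α σ : Type} [Fintype σ] (M : DFA α σ) {x : List α} (hx : x ∈ M.accepts) :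
    ∃ y ∈ M.accepts, y.length ≤ Fintype.card σ := by
  suffices h : ∀ n (x : List α), x.length = n → x ∈ M.accepts →
      ∃ y ∈ M.accepts, y.length ≤ Fintype.card σ from h _ x rfl hx
  clear hx x
  intro n
  induction n using Nat.strong_induction_on with
  | _ n ih =>
    intro x hn hx
    subst hn
    by_cases hlen : Fintype.card σ ≤ x.length
    · rcases eq_or_lt_of_le hlen with heq | hlt
      · exact ⟨x, hx, heq.ge⟩
      obtain ⟨a, b, c, rfl, _, hb, hsub⟩ := M.pumping_lemma hx hlen
      have hac : a ++ c ∈ M.accepts := by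
        refine hsub (show a ++ c ∈ ({a} * KStar.kstar {b} * {c} : Language α) from ?_)
        rw [Language.mem_mul]
        refine ⟨a, ?_, c, rfl, by simp⟩
        rw [Language.mem_mul]
        exact ⟨a, rfl, [], Language.nil_mem_kstar _, by simp⟩
      have hshort : (a ++ c).length < (a ++ b ++ c).length := by
        have := List.length_pos_iff.mpr hb
        simp; omega
      exact ih _ hshort _ rfl hac
    · exact ⟨x, hx, le_of_not_ge hlen⟩

theorem stmt16 {α : Type} {Q₁ Q₂ : Type} [Fintype Q₁] [Fintype Q₂]
    (A₁ : DFA α Q₁) (A₂ : DFA α Q₂)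
    (h : ∃ L : Language α, StrictSep A₁.accepts L A₂.accepts) :
    ∃ w : List α, w ∉ A₁.accepts ∧ w ∉ A₂.accepts ∧
      w.length ≤ Fintype.card Q₁ * Fintype.card Q₂ ∧
      ∃ (Q : Type) (_ : Fintype Q) (B : DFA α Q),
        Fintype.card Q ≤ Fintype.card Q₁ * (Fintype.card Q₁ * Fintype.card Q₂ + 2) ∧
        B.accepts = (fun v => v ∈ A₁.accepts ∨ v = w) ∧
        StrictSep A₁.accepts B.accepts A₂.accepts := by
  classical
  obtain ⟨L, h1, ⟨u, huL, huL1⟩, h3, ⟨v, hvL, hvL2⟩⟩ := h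
  have huL2 : u ∉ A₂.accepts := h3 u huL
  have hvL1 : v ∉ A₁.accepts := fun hv => hvL (h1 v hv)
  have huv : u ≠ v := fun he => hvL (he ▸ huL)
  -- the complement-product DFA
  set C : DFA α (Q₁ × Q₂) :=
    prodDFA A₁ A₂ {s | s.1 ∉ A₁.accept ∧ s.2 ∉ A₂.accept} with hC
  have hmemC : ∀ x : List α, x ∈ C.accepts ↔ x ∉ A₁.accepts ∧ x ∉ A₂.accepts := by
    intro x
    rw [DFA.mem_accepts, hC, prodDFA_eval]
    simp [prodDFA, DFA.mem_accepts]
  have huC : u ∈ C.accepts := (hmemC u).mpr ⟨huL1, huL2⟩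
  obtain ⟨w, hwC, hwlen⟩ := shrink C huC
  rw [hmemC] at hwC
  obtain ⟨hwL1, hwL2⟩ := hwC
  have hwlen' : w.length ≤ Fintype.card Q₁ * Fintype.card Q₂ := by
    simpa [Fintype.card_prod] using hwlen
  set B : DFA α (Q₁ × Option (Fin (w.length + 1))) :=
    prodDFA A₁ (prefDFA w)
      {s | s.1 ∈ A₁.accept ∨ s.2 = some ⟨w.length, by omega⟩} with hB
  have key : ∀ x : List α, x ∈ B.accepts ↔ x ∈ A₁.accepts ∨ x = w := by
    intro x
    rw [DFA.mem_accepts, hB, prodDFA_eval, prefDFA_eval]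
    constructor
    · rintro (hx | hx)
      · exact Or.inl hx
      · by_cases hp : x <+: w
        · rw [dif_pos hp] at hx
          have : x.length = w.length := by
            have := congrArg (fun o => o.map Fin.val) hx
            simpa using this
          exact Or.inr (List.IsPrefix.eq_of_length hp this)
        · rw [dif_neg hp] at hx; exact absurd hx (by simp)
    · rintro (hx | rfl)
      · exact Or.inl hx
      · right
        rw [dif_pos (List.prefix_refl _)]
  refine ⟨w, hwL1, hwL2, hwlen', Q₁ × Option (Fin (w.length + 1)), inferInstance, B, ?_, ?_, ?_⟩
  · simp only [Fintype.card_prod, Fintype.card_option, Fintype.card_fin]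
    have : w.length + 1 + 1 ≤ Fintype.card Q₁ * Fintype.card Q₂ + 2 := by omega
    exact Nat.mul_le_mul_left _ this
  · ext x
    exact key x
  · refine ⟨fun x hx => (key x).mpr (Or.inl hx), ⟨w, (key w).mpr (Or.inr rfl), hwL1⟩,
      fun x hx => ?_, ?_⟩
    · rcases (key x).mp hx with hx1 | rfl
      · exact h3 x (h1 x hx1)
      · exact hwL2
    · by_cases hwu : w = u
      · refine ⟨v, fun hv => ?_, hvL2⟩
        rcases (key v).mp hv with hv1 | rfl
        · exact hvL1 hv1
        · exact huv hwu.symm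
      · refine ⟨u, fun hu => ?_, huL2⟩
        rcases (key u).mp hu with hu1 | rfl
        · exact huL1 hu1
        · exact hwu rfl
end

section
/- For every n ≥ 1 and the language L_n = { aⁿ bᵢ² : 1 ≤ i ≤ n } over Σ_n = {a, b₁, ..., b_n}, and for every pair 1 ≤ i ≠ j ≤ n: the words aⁿbᵢ and aⁿbⱼ are not Myhill-Nerode equivalent with respect to L_n, with distinguishing tails bᵢ and bⱼ; moreover, the language L_n with the classes of aⁿbᵢ and aⁿbⱼ merged is still recognizable by a DFA with index(L_n) − 1 states. -/
namespace Stmt17Aux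

variable {n : ℕ}

lemma Ln_length {w : List (Sig n)} (h : w ∈ Ln n) : w.length = n + 2 := by
  obtain ⟨u, rfl⟩ := h; simp

lemma rep_mem (k : ℕ) (hk : k ≤ n) (u : Fin n) :
    List.replicate k (none : Sig n) ++ (List.replicate (n - k) none ++ [some u, some u]) ∈ Ln n := by
  refine ⟨u, ?_⟩
  rw [← List.append_assoc, ← List.replicate_add]
  congr 2
  omega

lemma b_mem (u : Fin n) :
    (List.replicate n (none : Sig n) ++ [some u]) ++ [some u] ∈ Ln n :=
  ⟨u, by simp⟩

lemma eq_of_two (u v x : Fin n)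
    (h : List.replicate n (none : Sig n) ++ [some u, some v]
       = List.replicate n none ++ [some x, some x]) : u = x ∧ v = x := by
  have := List.append_cancel_left h
  simp at this
  exact ⟨this.1, this.2⟩

lemma mem_two_iff (u v : Fin n) :
    List.replicate n (none : Sig n) ++ [some u, some v] ∈ Ln n ↔ u = v := by
  constructor
  · rintro ⟨x, hx⟩
    obtain ⟨h1, h2⟩ := eq_of_two u v x hx
    rw [h1, h2]
  · rintro rfl; exact ⟨u, rfl⟩

lemma prefix_cases {w t : List (Sig n)} (h : w ++ t ∈ Ln n) :
    (∃ k : ℕ, k ≤ n ∧ w = List.replicate k none) ∨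
    (∃ u : Fin n, w = List.replicate n none ++ [some u]) ∨ w ∈ Ln n := by
  obtain ⟨u, hu⟩ := h
  have hlen : w.length + t.length = n + 2 := by
    have := congrArg List.length hu; simpa using this
  rcases le_or_gt w.length n with hle | hgt
  · left
    refine ⟨w.length, hle, ?_⟩
    have hsplit : List.replicate n (none : Sig n) ++ [some u, some u]
        = List.replicate w.length none ++ (List.replicate (n - w.length) none ++ [some u, some u]) := by
      rw [← List.append_assoc, ← List.replicate_add]
      congr 2; omega
    rw [hsplit] at hu
    exact (List.append_inj hu (by simp)).1
  · rcases eq_or_lt_of_le (Nat.succ_le_of_lt hgt) with heq | hgt2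
    · right; left
      refine ⟨u, ?_⟩
      have hsplit : List.replicate n (none : Sig n) ++ [some u, some u]
          = (List.replicate n none ++ [some u]) ++ [some u] := by simp
      rw [hsplit] at hu
      refine (List.append_inj hu ?_).1
      simp; omega
    · right; right
      have ht : t = [] := by
        have : t.length = 0 := by omega
        exact List.length_eq_zero_iff.mp this
      subst ht
      exact ⟨u, by simpa using hu⟩

lemma dead_of {w : List (Sig n)}
    (h1 : ∀ k : ℕ, k ≤ n → w ≠ List.replicate k none)
    (h2 : ∀ u : Fin n, w ≠ List.replicate n none ++ [some u])
    (h3 : w ∉ Ln n) : ∀ t, w ++ t ∉ Ln n := by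
  intro t ht
  rcases prefix_cases ht with ⟨k, hk, hw⟩ | ⟨u, hw⟩ | h
  · exact h1 k hk hw
  · exact h2 u hw
  · exact h3 h

lemma mem_append_iff {w : List (Sig n)} (h : w ∈ Ln n) (t : List (Sig n)) :
    w ++ t ∈ Ln n ↔ t = [] := by
  constructor
  · intro ht
    have h1 := Ln_length ht
    have h2 := Ln_length h
    rw [List.length_append] at h1
    exact List.length_eq_zero_iff.mp (by omega)
  · rintro rfl; simpa using h

open Classical in
/-- classification function into `2n+3` classes -/
noncomputable def σf (n : ℕ) (w : List (Sig n)) : Fin (n + 1) ⊕ Fin n ⊕ Bool :=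
  if h : ∃ k : Fin (n + 1), w = List.replicate (k : ℕ) none then Sum.inl h.choose
  else if h : ∃ u : Fin n, w = List.replicate n none ++ [some u] then Sum.inr (Sum.inl h.choose)
  else if w ∈ Ln n then Sum.inr (Sum.inr true) else Sum.inr (Sum.inr false)

lemma σf_inl {w : List (Sig n)} {k : Fin (n + 1)} :
    σf n w = Sum.inl k ↔ w = List.replicate (k : ℕ) none := by
  unfold σf
  split_ifs with h1 h2 h3
  · constructor
    · intro h
      have hk : h1.choose = k := by injection h
      rw [h1.choose_spec, hk]
    · intro hw
      have hs : List.replicate ((k : ℕ)) (none : Sig n) = List.replicate ((h1.choose : ℕ)) none :=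
        hw.symm.trans h1.choose_spec
      have hk : h1.choose = k := by
        have hl := congrArg List.length hs
        simp at hl
        apply Fin.ext
        omega
      exact congrArg Sum.inl hk
  all_goals
    simp only [reduceCtorEq, false_iff]
    intro hw
    exact h1 ⟨k, hw⟩

lemma σf_b {w : List (Sig n)} {u : Fin n} :
    σf n w = Sum.inr (Sum.inl u) ↔ w = List.replicate n none ++ [some u] := by
  unfold σf
  split_ifs with h1 h2 h3
  · simp only [reduceCtorEq, false_iff]
    intro hw
    obtain ⟨k, hk⟩ := h1
    rw [hw] at hk
    have := congrArg List.length hk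
    simp at this
    omega
  · constructor
    · intro h
      have hk : h2.choose = u := by
        have := Sum.inr.inj h
        exact Sum.inl.inj this
      rw [h2.choose_spec, hk]
    · intro hw
      have hs : List.replicate n (none : Sig n) ++ [some u] = List.replicate n none ++ [some h2.choose] :=
        hw.symm.trans h2.choose_spec
      have hk : h2.choose = u := by
        have := List.append_cancel_left hs
        simp at this
        exact this.symm
      exact congrArg (fun x => Sum.inr (Sum.inl x)) hk
  all_goals
    simp only [reduceCtorEq, false_iff, Sum.inr.injEq]
    intro hw
    exact h2 ⟨u, hw⟩

lemma σf_acc {w : List (Sig n)} : σf n w = Sum.inr (Sum.inr true) ↔ w ∈ Ln n := by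
  unfold σf
  split_ifs with h1 h2 h3
  · simp only [reduceCtorEq, false_iff]
    intro hw
    obtain ⟨k, hk⟩ := h1
    have := Ln_length hw
    rw [hk] at this
    simp at this
    omega
  · simp only [reduceCtorEq, false_iff, Sum.inr.injEq]
    intro hw
    obtain ⟨u, hu⟩ := h2
    have := Ln_length hw
    rw [hu] at this
    simp at this
  · simpa using h3
  · simpa using h3

lemma σf_dead' {w : List (Sig n)} (hn : 1 ≤ n) (hd : ∀ t, w ++ t ∉ Ln n) :
    σf n w = Sum.inr (Sum.inr false) := by
  have u₀ : Fin n := ⟨0, hn⟩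
  unfold σf
  rw [dif_neg, dif_neg, if_neg]
  · intro hw; exact hd [] (by simpa using hw)
  · rintro ⟨u, rfl⟩
    exact hd [some u] (b_mem u)
  · rintro ⟨k, rfl⟩
    exact hd _ (rep_mem (k : ℕ) (by omega) u₀)

lemma σf_dead {w : List (Sig n)} (h : σf n w = Sum.inr (Sum.inr false)) :
    ∀ t, w ++ t ∉ Ln n := by
  unfold σf at h
  split_ifs at h with h1 h2 h3
  · simp at h
  · simp at h
  refine dead_of ?_ ?_ h3
  · intro k hk hw
    exact h1 ⟨⟨k, by omega⟩, hw⟩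
  · intro u hw
    exact h2 ⟨u, hw⟩

lemma equiv_iff (hn : 1 ≤ n) (w₁ w₂ : List (Sig n)) :
    mnEquiv (Ln n) w₁ w₂ ↔ σf n w₁ = σf n w₂ := by
  have u₀ : Fin n := ⟨0, hn⟩
  constructor
  · intro he
    rcases v1 : σf n w₁ with k | u | b
    · -- w₁ = replicate k none
      have hw1 := σf_inl.mp v1
      have hk : (k : ℕ) ≤ n := by omega
      have hmem : w₁ ++ (List.replicate (n - k) none ++ [some u₀, some u₀]) ∈ Ln n := by
        rw [hw1]; exact rep_mem _ hk u₀
      have hmem2 := (he _).mp hmem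
      rcases prefix_cases hmem2 with ⟨k', hk', hw2⟩ | ⟨u', hw2⟩ | hL
      · have hlen := Ln_length hmem2
        rw [hw2] at hlen
        simp at hlen
        have hk'k : k' = (k : ℕ) := by omega
        exact (σf_inl.mpr (by rw [hw2, hk'k])).symm
      · exfalso
        have hlen := Ln_length hmem2
        rw [hw2] at hlen
        simp at hlen
      · exfalso
        have hlen := Ln_length hmem2
        have hlen2 := Ln_length hL
        rw [List.length_append] at hlen
        simp at hlen
        omega
    · -- w₁ = replicate n none ++ [some u]
      have hw1 := σf_b.mp v1
      have hmem : w₁ ++ [some u] ∈ Ln n := by rw [hw1]; exact b_mem u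
      have hmem2 := (he _).mp hmem
      rcases prefix_cases hmem2 with ⟨k', hk', hw2⟩ | ⟨u', hw2⟩ | hL
      · exfalso
        have hlen := Ln_length hmem2
        rw [hw2] at hlen
        simp at hlen
        omega
      · have hm : List.replicate n (none : Sig n) ++ [some u', some u] ∈ Ln n := by
          rw [hw2, List.append_assoc] at hmem2
          simpa using hmem2
        have huu : u' = u := (mem_two_iff u' u).mp hm
        exact (σf_b.mpr (by rw [hw2, huu])).symm
      · exfalso
        have hlen := Ln_length hmem2
        have hlen2 := Ln_length hL
        rw [List.length_append] at hlen
        simp at hlen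
        omega
    · cases b
      · -- dead
        have hd := σf_dead v1
        rw [σf_dead' hn]
        intro t ht
        exact hd t ((he t).mpr ht)
      · -- accepting
        have hw1 := σf_acc.mp v1
        have hmem : w₂ ∈ Ln n := by
          have := (he []).mp (by simpa using hw1)
          simpa using this
        rw [σf_acc.mpr hmem]
  · intro hσ
    rcases v1 : σf n w₁ with k | u | b
    · rw [v1] at hσ
      have hw1 := σf_inl.mp v1
      have hw2 := σf_inl.mp hσ.symm
      rw [hw1, hw2]
      exact fun t => Iff.rfl
    · rw [v1] at hσ
      have hw1 := σf_b.mp v1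
      have hw2 := σf_b.mp hσ.symm
      rw [hw1, hw2]
      exact fun t => Iff.rfl
    · rw [v1] at hσ
      cases b
      · have h1 := σf_dead v1
        have h2 := σf_dead hσ.symm
        intro t
        exact iff_of_false (h1 t) (h2 t)
      · have h1 := σf_acc.mp v1
        have h2 := σf_acc.mp hσ.symm
        intro t
        rw [mem_append_iff h1 t, mem_append_iff h2 t]

lemma σf_surj (hn : 1 ≤ n) : Function.Surjective (σf n) := by
  have u₀ : Fin n := ⟨0, hn⟩
  rintro (k | u | b)
  · exact ⟨List.replicate (k : ℕ) none, σf_inl.mpr rfl⟩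
  · exact ⟨List.replicate n none ++ [some u], σf_b.mpr rfl⟩
  · cases b
    · refine ⟨[some u₀], σf_dead' hn ?_⟩
      rintro t ⟨x, hx⟩
      have hn' : List.replicate n (none : Sig n) = none :: List.replicate (n - 1) none := by
        have : n = (n - 1) + 1 := by omega
        rw [this]
        rfl
      rw [hn'] at hx
      simp at hx
    · exact ⟨List.replicate n none ++ [some u₀, some u₀], σf_acc.mpr ⟨u₀, rfl⟩⟩

lemma index_eq (hn : 1 ≤ n) : mnIndex (Ln n) = 2 * n + 3 := by
  let f : Quotient (mnSetoid (Ln n)) → Fin (n + 1) ⊕ Fin n ⊕ Bool :=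
    Quotient.lift (σf n) (fun a b h => (equiv_iff hn a b).mp h)
  have hbij : Function.Bijective f := by
    constructor
    · intro a b
      refine Quotient.inductionOn₂ a b ?_
      intro x y h
      exact Quotient.sound ((equiv_iff hn x y).mpr h)
    · intro c
      obtain ⟨w, hw⟩ := σf_surj hn c
      exact ⟨Quotient.mk _ w, hw⟩
  have := Nat.card_eq_of_bijective f hbij
  rw [mnIndex, this, Nat.card_eq_fintype_card]
  simp [Fintype.card_sum]
  omega

/-! ### The merged DFA -/

def rm (i j : Fin n) (hij : i ≠ j) (m : Fin n) : {m : Fin n // m ≠ j} :=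
  if h : m = j then ⟨i, hij⟩ else ⟨m, h⟩

def dfaA (n : ℕ) (i j : Fin n) (hij : i ≠ j) :
    DFA (Sig n) (Fin (n + 1) ⊕ {m : Fin n // m ≠ j} ⊕ Bool) where
  step q c :=
    match q, c with
    | Sum.inl k, none =>
        if h : (k : ℕ) < n then Sum.inl ⟨(k : ℕ) + 1, by omega⟩ else Sum.inr (Sum.inr false)
    | Sum.inl k, some m =>
        if (k : ℕ) = n then Sum.inr (Sum.inl (rm i j hij m)) else Sum.inr (Sum.inr false)
    | Sum.inr (Sum.inl s), some m' =>
        if rm i j hij m' = s then Sum.inr (Sum.inr true) else Sum.inr (Sum.inr false)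
    | Sum.inr (Sum.inl _), none => Sum.inr (Sum.inr false)
    | Sum.inr (Sum.inr _), _ => Sum.inr (Sum.inr false)
  start := Sum.inl 0
  accept := {Sum.inr (Sum.inr true)}

variable {i j : Fin n} {hij : i ≠ j}

lemma evalFrom_rep (i j : Fin n) (hij : i ≠ j) (m : ℕ) (k : Fin (n + 1)) (h : (k : ℕ) + m ≤ n) :
    (dfaA n i j hij).evalFrom (Sum.inl k) (List.replicate m none)
      = Sum.inl ⟨(k : ℕ) + m, by omega⟩ := by
  induction m generalizing k with
  | zero => simp [DFA.evalFrom]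
  | succ m ih =>
    rw [List.replicate_succ]
    have hstep : (dfaA n i j hij).step (Sum.inl k) none = Sum.inl ⟨(k : ℕ) + 1, by omega⟩ := by
      simp only [dfaA]
      rw [dif_pos (by omega)]
    have : (dfaA n i j hij).evalFrom (Sum.inl k) (none :: List.replicate m none)
        = (dfaA n i j hij).evalFrom (Sum.inl ⟨(k : ℕ) + 1, by omega⟩) (List.replicate m none) := by
      simp [DFA.evalFrom, hstep]
    rw [this, ih ⟨(k : ℕ) + 1, by omega⟩ (by simp; omega)]
    congr 1
    apply Fin.ext
    simp
    omega

lemma eval_rep (i j : Fin n) (hij : i ≠ j) :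
    (dfaA n i j hij).eval (List.replicate n none) = Sum.inl ⟨n, by omega⟩ := by
  have := evalFrom_rep i j hij n (0 : Fin (n + 1)) (by simp)
  simpa [DFA.eval, dfaA] using this

lemma eval_word (i j : Fin n) (hij : i ≠ j) (u v : Fin n) :
    (dfaA n i j hij).eval (List.replicate n none ++ [some u, some v])
      = if rm i j hij v = rm i j hij u then Sum.inr (Sum.inr true)
        else Sum.inr (Sum.inr false) := by
  have hsplit : List.replicate n (none : Sig n) ++ [some u, some v]
      = ((List.replicate n none ++ [some u]) ++ [some v]) := by simp
  rw [hsplit, DFA.eval_append_singleton, DFA.eval_append_singleton, eval_rep i j hij]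
  have h1 : (dfaA n i j hij).step (Sum.inl ⟨n, by omega⟩) (some u)
      = Sum.inr (Sum.inl (rm i j hij u)) := by
    simp [dfaA]
  rw [h1]
  rfl

lemma eval_spec (i j : Fin n) (hij : i ≠ j) (w : List (Sig n)) :
    (∀ k : Fin (n + 1), (dfaA n i j hij).eval w = Sum.inl k → w = List.replicate (k : ℕ) none) ∧
    (∀ s, (dfaA n i j hij).eval w = Sum.inr (Sum.inl s) →
      ∃ u, rm i j hij u = s ∧ w = List.replicate n none ++ [some u]) ∧
    ((dfaA n i j hij).eval w = Sum.inr (Sum.inr true) →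
      ∃ u v, rm i j hij u = rm i j hij v ∧ w = List.replicate n none ++ [some u, some v]) := by
  induction w using List.reverseRecOn with
  | nil =>
    refine ⟨?_, ?_, ?_⟩
    · intro k h
      simp only [DFA.eval_nil, dfaA] at h
      have : (0 : Fin (n + 1)) = k := Sum.inl.inj h
      rw [← this]
      rfl
    · intro s h
      simp [DFA.eval_nil, dfaA] at h
    · intro h
      simp [DFA.eval_nil, dfaA] at h
  | append_singleton w c IH =>
    obtain ⟨IH1, IH2, IH3⟩ := IH
    rcases hq : (dfaA n i j hij).eval w with k | s | b
    · have hw := IH1 k hq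
      rcases c with _ | m
      · by_cases hk : (k : ℕ) < n
        · have hstep : (dfaA n i j hij).eval (w ++ [none])
              = Sum.inl ⟨(k : ℕ) + 1, by omega⟩ := by
            rw [DFA.eval_append_singleton, hq]
            simp only [dfaA]
            rw [dif_pos hk]
          refine ⟨?_, ?_, ?_⟩ <;> rw [hstep]
          · intro k' h
            have : (⟨(k : ℕ) + 1, by omega⟩ : Fin (n + 1)) = k' := Sum.inl.inj h
            rw [← this, hw]
            simp [List.replicate_succ']
          · intro s h; simp at h
          · intro h; simp at h
        · have hstep : (dfaA n i j hij).eval (w ++ [none]) = Sum.inr (Sum.inr false) := by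
            rw [DFA.eval_append_singleton, hq]
            simp only [dfaA]
            rw [dif_neg hk]
          refine ⟨?_, ?_, ?_⟩ <;> rw [hstep] <;> intro _ <;> simp_all
      · by_cases hk : (k : ℕ) = n
        · have hstep : (dfaA n i j hij).eval (w ++ [some m])
              = Sum.inr (Sum.inl (rm i j hij m)) := by
            rw [DFA.eval_append_singleton, hq]
            simp only [dfaA]
            rw [if_pos hk]
          refine ⟨?_, ?_, ?_⟩ <;> rw [hstep]
          · intro k' h; simp at h
          · intro s h
            refine ⟨m, Sum.inl.inj (Sum.inr.inj h), ?_⟩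
            rw [hw, hk]
          · intro h; simp at h
        · have hstep : (dfaA n i j hij).eval (w ++ [some m]) = Sum.inr (Sum.inr false) := by
            rw [DFA.eval_append_singleton, hq]
            simp only [dfaA]
            rw [if_neg hk]
          refine ⟨?_, ?_, ?_⟩ <;> rw [hstep] <;> intro _ <;> simp_all
    · obtain ⟨u, hru, hw⟩ := IH2 s hq
      rcases c with _ | m
      · have hstep : (dfaA n i j hij).eval (w ++ [none]) = Sum.inr (Sum.inr false) := by
          rw [DFA.eval_append_singleton, hq]
          rfl
        refine ⟨?_, ?_, ?_⟩ <;> rw [hstep] <;> intro _ <;> simp_all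
      · by_cases hm : rm i j hij m = s
        · have hstep : (dfaA n i j hij).eval (w ++ [some m]) = Sum.inr (Sum.inr true) := by
            rw [DFA.eval_append_singleton, hq]
            simp only [dfaA]
            rw [if_pos hm]
          refine ⟨?_, ?_, ?_⟩ <;> rw [hstep]
          · intro k' h; simp at h
          · intro s' h; simp at h
          · intro _
            refine ⟨u, m, hru.trans hm.symm, ?_⟩
            rw [hw]
            simp
        · have hstep : (dfaA n i j hij).eval (w ++ [some m]) = Sum.inr (Sum.inr false) := by
            rw [DFA.eval_append_singleton, hq]
            simp only [dfaA]
            rw [if_neg hm]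
          refine ⟨?_, ?_, ?_⟩ <;> rw [hstep] <;> intro _ <;> simp_all
    · have hstep : (dfaA n i j hij).eval (w ++ [c]) = Sum.inr (Sum.inr false) := by
        rw [DFA.eval_append_singleton, hq]
        rcases c with _ | m <;> rfl
      refine ⟨?_, ?_, ?_⟩ <;> rw [hstep] <;> intro _ <;> simp_all

lemma rm_eq_iff (i j : Fin n) (hij : i ≠ j) (u v : Fin n) :
    rm i j hij u = rm i j hij v ↔ u = v ∨ (u = i ∧ v = j) ∨ (u = j ∧ v = i) := by
  unfold rm
  by_cases hu : u = j <;> by_cases hv : v = j <;>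
    simp [hu, hv, Subtype.ext_iff] <;>
    constructor <;> intro h <;> first
      | (rcases h with h | h <;> simp_all)
      | simp_all
      | (subst h; tauto)
      | tauto

lemma accepts_eq (hn : 1 ≤ n) (i j : Fin n) (hij : i ≠ j) :
    (dfaA n i j hij).accepts = { w | w ∈ Ln n ∨
      w = List.replicate n none ++ [some i, some j] ∨
      w = List.replicate n none ++ [some j, some i] } := by
  ext w
  rw [DFA.mem_accepts]
  constructor
  · intro h
    have hacc : (dfaA n i j hij).eval w = Sum.inr (Sum.inr true) := h
    obtain ⟨u, v, hr, hw⟩ := (eval_spec i j hij w).2.2 hacc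
    rw [rm_eq_iff] at hr
    rcases hr with rfl | ⟨rfl, rfl⟩ | ⟨rfl, rfl⟩
    · exact Or.inl ⟨u, hw⟩
    · exact Or.inr (Or.inl hw)
    · exact Or.inr (Or.inr hw)
  · intro h
    rcases h with ⟨u, rfl⟩ | hw | hw
    · show (dfaA n i j hij).eval _ ∈ _
      rw [eval_word i j hij u u, if_pos rfl]
      rfl
    · show (dfaA n i j hij).eval _ ∈ _
      rw [hw, eval_word i j hij i j, if_pos (by rw [rm_eq_iff]; tauto)]
      rfl
    · show (dfaA n i j hij).eval _ ∈ _
      rw [hw, eval_word i j hij j i, if_pos (by rw [rm_eq_iff]; tauto)]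
      rfl

end Stmt17Aux

open Stmt17Aux

theorem stmt17 (n : ℕ) (hn : 1 ≤ n) (i j : Fin n) (hij : i ≠ j) :
    ¬ mnEquiv (Ln n) (List.replicate n none ++ [some i]) (List.replicate n none ++ [some j]) ∧
    (List.replicate n none ++ [some i]) ++ [some i] ∈ Ln n ∧
    (List.replicate n none ++ [some j]) ++ [some i] ∉ Ln n ∧
    (List.replicate n none ++ [some j]) ++ [some j] ∈ Ln n ∧
    (List.replicate n none ++ [some i]) ++ [some j] ∉ Ln n ∧
    ∃ (Q : Type) (_ : Fintype Q) (A : DFA (Sig n) Q),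
      Fintype.card Q = mnIndex (Ln n) - 1 ∧
      A.accepts = { w | w ∈ Ln n ∨
        w = List.replicate n none ++ [some i, some j] ∨
        w = List.replicate n none ++ [some j, some i] } := by
  have hji : ((List.replicate n none ++ [some j]) ++ [some i] : List (Sig n)) ∉ Ln n := by
    rw [List.append_assoc]
    rw [show ([some j] ++ [some i] : List (Sig n)) = [some j, some i] by rfl]
    rw [mem_two_iff]
    exact fun h => hij h.symm
  have hijmem : ((List.replicate n none ++ [some i]) ++ [some j] : List (Sig n)) ∉ Ln n := by
    rw [List.append_assoc]
    rw [show ([some i] ++ [some j] : List (Sig n)) = [some i, some j] by rfl]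
    rw [mem_two_iff]
    exact hij
  refine ⟨?_, b_mem i, hji, b_mem j, hijmem, ?_⟩
  · intro he
    exact hji ((he [some i]).mp (b_mem i))
  · refine ⟨Fin (n + 1) ⊕ {m : Fin n // m ≠ j} ⊕ Bool, inferInstance, dfaA n i j hij, ?_,
      accepts_eq hn i j hij⟩
    rw [index_eq hn]
    have hcard : Fintype.card {m : Fin n // m ≠ j} = n - 1 := by
      simp [Fintype.card_subtype_compl]
    simp [Fintype.card_sum, hcard]
    omega
end
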